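/- arXiv:2304.05486 — 3 statements merged into one kernel-verified Lean document; each statement's English description precedes it below -/
import Mathlib

section
/- Let w ∈ Solo(P)^ω for P ⊆ Π. Then w is Fair for P if and only if w has no suffix in ⋃_{∅≠Q⊊P} Solo(Q)^ω. -/
/-- `Solo P G` : in the instant graph `G`, processes of `P` receive no messages
from outside `P`. -/
def Solo {n : ℕ} (P : Set (Fin (n + 1))) (G : Fin (n + 1) → Fin (n + 1) → Prop) : Prop :=
  ∀ p q, G p q → q ∈ P → p ∈ P

/-- A graph of `IS_n`: self-loops, Immediacy and Containment. -/
def IsIS {n : ℕ} (G : Fin (n + 1) → Fin (n + 1) → Prop) : Prop :=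
  (∀ a, G a a) ∧ (∀ a b c, G a b → G b c → G a c) ∧ (∀ a b, a ≠ b → G a b ∨ G b a)

/-- There is a journey from `p` to `q` in the dynamic graph `w` starting at round `r`. -/
def Journey {n : ℕ} (w : ℕ → Fin (n + 1) → Fin (n + 1) → Prop) (r : ℕ)
    (p q : Fin (n + 1)) : Prop :=
  ∃ (t : ℕ) (f : Fin (t + 1) → Fin (n + 1)) (g : Fin t → ℕ),
    f 0 = p ∧ f (Fin.last t) = q ∧ StrictMono g ∧ (∀ i, r ≤ g i) ∧
    ∀ i : Fin t, w (g i) (f i.castSucc) (f i.succ)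

/-- `w` is Fair for `P`. -/
def Fair {n : ℕ} (P : Set (Fin (n + 1))) (w : ℕ → Fin (n + 1) → Fin (n + 1) → Prop) : Prop :=
  (∀ r, Solo P (w r)) ∧ ∀ p ∈ P, ∀ q ∈ P, ∀ r, Journey w r p q

lemma journey_refl {n : ℕ} (w : ℕ → Fin (n + 1) → Fin (n + 1) → Prop) (r : ℕ)
    (q : Fin (n + 1)) : Journey w r q q :=
  ⟨0, fun _ => q, Fin.elim0, rfl, rfl, fun a => a.elim0, fun a => a.elim0, fun a => a.elim0⟩

lemma journey_mono {n : ℕ} {w : ℕ → Fin (n + 1) → Fin (n + 1) → Prop} {r r' : ℕ}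
    (h : r ≤ r') {p q : Fin (n + 1)} (hj : Journey w r' p q) : Journey w r p q := by
  obtain ⟨t, f, g, h1, h2, h3, h4, h5⟩ := hj
  exact ⟨t, f, g, h1, h2, h3, fun i => le_trans h (h4 i), h5⟩

lemma journey_cons {n : ℕ} {w : ℕ → Fin (n + 1) → Fin (n + 1) → Prop} {s : ℕ}
    {a b q : Fin (n + 1)} (hab : w s a b) (hj : Journey w (s + 1) b q) :
    Journey w s a q := by
  obtain ⟨t, f, g, h1, h2, h3, h4, h5⟩ := hj
  refine ⟨t + 1, Fin.cases a f, Fin.cases s g, by simp, ?_, ?_, ?_, ?_⟩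
  · rw [← Fin.succ_last]; simp only [Fin.cases_succ]; exact h2
  · intro i j hij
    induction j using Fin.cases with
    | zero => exact absurd hij (Fin.not_lt_zero i)
    | succ j' =>
      induction i using Fin.cases with
      | zero =>
        simp only [Fin.cases_zero, Fin.cases_succ]
        exact lt_of_lt_of_le (Nat.lt_succ_self s) (h4 j')
      | succ i' =>
        simp only [Fin.cases_succ]
        exact h3 (Fin.succ_lt_succ_iff.mp hij)
  · intro i
    induction i using Fin.cases with
    | zero => simp only [Fin.cases_zero]; exact le_refl s
    | succ j =>
      simp only [Fin.cases_succ]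
      exact le_trans (Nat.le_succ s) (h4 j)
  · intro i
    induction i using Fin.cases with
    | zero =>
      simp only [Fin.castSucc_zero, Fin.cases_zero, Fin.cases_succ, h1]
      exact hab
    | succ j =>
      rw [← Fin.succ_castSucc]
      simp only [Fin.cases_succ]
      exact h5 j

lemma mem_of_journey {n : ℕ} {w : ℕ → Fin (n + 1) → Fin (n + 1) → Prop} {s : ℕ}
    {Q : Set (Fin (n + 1))} (hSolo : ∀ r ≥ s, Solo Q (w r)) {p q : Fin (n + 1)}
    (hj : Journey w s p q) (hq : q ∈ Q) : p ∈ Q := by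
  obtain ⟨t, f, g, h1, h2, h3, h4, h5⟩ := hj
  have key : ∀ i : Fin (t + 1), f i ∈ Q := by
    intro i
    induction i using Fin.reverseInduction with
    | last => rw [h2]; exact hq
    | cast i ih => exact hSolo (g i) (h4 i) _ _ (h5 i) ih
  rw [← h1]; exact key 0

theorem fair_iff_no_solo_suffix {n : ℕ} (w : ℕ → Fin (n + 1) → Fin (n + 1) → Prop)
    (hIS : ∀ r, IsIS (w r)) (P : Set (Fin (n + 1)))
    (hw : ∀ r, Solo P (w r)) :
    Fair P w ↔
      ¬ ∃ Q : Set (Fin (n + 1)), Q.Nonempty ∧ Q ⊂ P ∧ ∃ s, ∀ r ≥ s, Solo Q (w r) := by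
  constructor
  · rintro ⟨_, hfair⟩ ⟨Q, ⟨q, hqQ⟩, hQP, s, hsolo⟩
    obtain ⟨p, hpP, hpQ⟩ := Set.exists_of_ssubset hQP
    exact hpQ (mem_of_journey hsolo (hfair p hpP q (hQP.1 hqQ) s) hqQ)
  · intro h
    refine ⟨hw, ?_⟩
    intro p hp q hq r
    by_contra hnj
    -- the set of processes of P with a journey to q from round r + k
    set Qs : ℕ → Set (Fin (n + 1)) := fun k => {x | x ∈ P ∧ Journey w (r + k) x q} with hQs
    have hanti : ∀ k k', k ≤ k' → Qs k' ⊆ Qs k := by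
      intro k k' hkk' x hx
      exact ⟨hx.1, journey_mono (by omega) hx.2⟩
    have hne : (Set.range fun k => (Qs k).ncard).Nonempty := ⟨(Qs 0).ncard, 0, rfl⟩
    obtain ⟨s₀, hs₀⟩ := Nat.sInf_mem hne
    have hmin : ∀ k, (Qs s₀).ncard ≤ (Qs k).ncard := by
      intro k; exact hs₀.trans_le (Nat.sInf_le ⟨k, rfl⟩)
    have hstab : ∀ k, s₀ ≤ k → Qs k = Qs s₀ := by
      intro k hk
      exact Set.eq_of_subset_of_ncard_le (hanti s₀ k hk) (hmin k) (Set.toFinite _)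
    have hqQ : q ∈ Qs s₀ := ⟨hq, journey_refl w _ q⟩
    have hpQ : p ∉ Qs s₀ := fun hpq => hnj (journey_mono (Nat.le_add_right r s₀) hpq.2)
    refine h ⟨Qs s₀, ⟨q, hqQ⟩, ?_, r + s₀, ?_⟩
    · refine ssubset_of_subset_of_ne (fun x hx => hx.1) ?_
      intro heq
      exact hpQ (heq ▸ hp)
    · intro ρ hρ a b hab hbQ
      have hk : r + (ρ - r) = ρ := by omega
      have hb' : b ∈ Qs (ρ - r + 1) := by
        rw [hstab (ρ - r + 1) (by omega)]; exact hbQ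
      have hjb : Journey w (ρ + 1) b q := by
        have := hb'.2
        rwa [show r + (ρ - r + 1) = ρ + 1 by omega] at this
      have hja : Journey w ρ a q := journey_cons hab hjb
      have haP : a ∈ P := hw ρ a b hab hbQ.1
      have : a ∈ Qs (ρ - r) := ⟨haP, by rwa [hk]⟩
      rwa [hstab (ρ - r) (by omega)] at this
end

section
/- Let w be a dynamic graph over instant graphs in IS_n, and suppose w is Fair for P. If w has a suffix in Solo(Q)^ω for some nonempty Q ⊊ P, then considering p ∈ P\Q and a first process q_0 ∈ Q causally influenced by p after the suffix starts leads to a contradiction; hence no such suffix exists. -/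
theorem fair_no_smaller_solo_suffix {n : ℕ} (w : ℕ → Fin (n + 1) → Fin (n + 1) → Prop)
    (hIS : ∀ r, IsIS (w r)) (P : Set (Fin (n + 1)))
    (hfair : Fair P w) :
    ¬ ∃ Q : Set (Fin (n + 1)), Q.Nonempty ∧ Q ⊂ P ∧ ∃ s, ∀ r ≥ s, Solo Q (w r) := by
  rintro ⟨Q, ⟨q0, hq0⟩, hQP, s, hsolo⟩
  obtain ⟨p, hpP, hpQ⟩ := Set.exists_of_ssubset hQP
  have hqP : q0 ∈ P := hQP.1 hq0
  obtain ⟨t, f, g, hf0, hft, _, hgs, hstep⟩ := hfair.2 p hpP q0 hqP s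
  -- find a crossing into Q
  have key : ∀ k : ℕ, ∀ hk : k ≤ t, f ⟨k, Nat.lt_succ_of_le hk⟩ ∉ Q := by
    intro k
    induction k with
    | zero => intro _ hc; exact hpQ (hf0 ▸ hc)
    | succ m ih =>
      intro hk hc
      have hm : m < t := hk
      have hprev : f (Fin.castSucc ⟨m, hm⟩) ∈ Q :=
        hsolo (g ⟨m, hm⟩) (hgs _) _ _ (hstep ⟨m, hm⟩) hc
      exact ih (le_of_lt hm) hprev
  exact key t le_rfl (hft ▸ hq0)
end

section
/- Let τ be a maximal simplex of the standard chromatic subdivision Chr(S, χ) of a chromatic n-simplex. Then there exists a Sperner labelling λ of Chr(S, χ) such that a simplex σ ∈ Chr(S, χ) satisfies λ(σ) = {0,…,n} if and only if σ = τ. -/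
set_option maxHeartbeats 1000000


/-- A vertex of the standard chromatic subdivision: a colour `i` together with a
view `V` containing `i`. -/
abbrev ChrVertex (n : ℕ) := {iv : Fin (n + 1) × Finset (Fin (n + 1)) // iv.1 ∈ iv.2}

/-- A simplex of the standard chromatic subdivision: distinct colours, views
linearly ordered by inclusion, and the immediacy condition. -/
def IsChrSimplex {n : ℕ} (σ : Finset (ChrVertex n)) : Prop :=
  (∀ x ∈ σ, ∀ y ∈ σ, x.1.1 = y.1.1 → x = y) ∧
  (∀ x ∈ σ, ∀ y ∈ σ, x.1.2 ⊆ y.1.2 ∨ y.1.2 ⊆ x.1.2) ∧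
  (∀ x ∈ σ, ∀ y ∈ σ, x.1.1 ∈ y.1.2 → x.1.2 ⊆ y.1.2)

section Aux

variable {n : ℕ}

/-- Cyclic successor inside a finite set. -/
def cnext (s : Finset (Fin (n + 1))) (a : Fin (n + 1)) : Fin (n + 1) :=
  if h : (s.filter fun z => a < z).Nonempty then (s.filter fun z => a < z).min' h
  else if hs : s.Nonempty then s.min' hs else a

lemma cnext_mem {s : Finset (Fin (n + 1))} {a : Fin (n + 1)} (ha : a ∈ s) : cnext s a ∈ s := by
  unfold cnext
  split_ifs with h hs
  · exact (Finset.mem_filter.mp ((s.filter _).min'_mem h)).1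
  · exact s.min'_mem hs
  · exact ha

lemma eq_max_of_filter_empty {s : Finset (Fin (n + 1))} (hs : s.Nonempty) {a : Fin (n + 1)}
    (ha : a ∈ s) (h : ¬(s.filter fun z => a < z).Nonempty) : a = s.max' hs := by
  refine le_antisymm (s.le_max' a ha) ?_
  by_contra hlt
  push_neg at hlt
  exact h ⟨s.max' hs, Finset.mem_filter.mpr ⟨s.max'_mem hs, hlt⟩⟩

lemma eq_min_of_filter_empty {s : Finset (Fin (n + 1))} (hs : s.Nonempty) {b : Fin (n + 1)}
    (hb : b ∈ s) (h : ¬(s.filter fun z => z < b).Nonempty) : b = s.min' hs := by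
  refine le_antisymm ?_ (s.min'_le b hb)
  by_contra hlt
  push_neg at hlt
  exact h ⟨s.min' hs, Finset.mem_filter.mpr ⟨s.min'_mem hs, hlt⟩⟩

lemma cnext_closure {s C : Finset (Fin (n + 1))} (hCs : C ⊆ s) (hCne : C.Nonempty)
    (hcl : ∀ a ∈ C, cnext s a ∈ C) : s ⊆ C := by
  obtain ⟨a0, ha0⟩ := hCne
  have hs : s.Nonempty := ⟨a0, hCs ha0⟩
  have hmax : s.max' hs ∈ C := by
    have key : ∀ k, ∀ a ∈ C, (s.filter fun z => a < z).card ≤ k → s.max' hs ∈ C := by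
      intro k
      induction k with
      | zero =>
        intro a ha hle
        have hemp : ¬(s.filter fun z => a < z).Nonempty := by
          rw [Finset.not_nonempty_iff_eq_empty]
          exact Finset.card_eq_zero.mp (Nat.le_zero.mp hle)
        rw [← eq_max_of_filter_empty hs (hCs ha) hemp]; exact ha
      | succ k ih =>
        intro a ha hle
        by_cases hne : (s.filter fun z => a < z).Nonempty
        · have hbC : cnext s a ∈ C := hcl a ha
          have hbval : cnext s a = (s.filter fun z => a < z).min' hne := by
            unfold cnext; rw [dif_pos hne]
          have hbf : cnext s a ∈ s.filter fun z => a < z := by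
            rw [hbval]; exact Finset.min'_mem _ hne
          have hab : a < cnext s a := (Finset.mem_filter.mp hbf).2
          apply ih (cnext s a) hbC
          have hsub : (s.filter fun z => cnext s a < z) ⊆
              (s.filter fun z => a < z).erase (cnext s a) := by
            intro z hz
            rcases Finset.mem_filter.mp hz with ⟨hz1, hz2⟩
            exact Finset.mem_erase.mpr ⟨ne_of_gt hz2,
              Finset.mem_filter.mpr ⟨hz1, lt_trans hab hz2⟩⟩
          have hcle := Finset.card_le_card hsub
          rw [Finset.card_erase_of_mem hbf] at hcle
          omega
        · rw [← eq_max_of_filter_empty hs (hCs ha) hne]; exact ha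
    exact key _ a0 ha0 le_rfl
  have hminC : s.min' hs ∈ C := by
    have h1 : ¬(s.filter fun z => s.max' hs < z).Nonempty := by
      rintro ⟨z, hz⟩
      rcases Finset.mem_filter.mp hz with ⟨hz1, hz2⟩
      exact absurd (s.le_max' z hz1) (not_le_of_gt hz2)
    have h2 : cnext s (s.max' hs) = s.min' hs := by
      unfold cnext; rw [dif_neg h1, dif_pos hs]
    rw [← h2]; exact hcl _ hmax
  intro b hb
  have key2 : ∀ k, ∀ b ∈ s, (s.filter fun z => z < b).card ≤ k → b ∈ C := by
    intro k
    induction k with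
    | zero =>
      intro b hb hle
      have hemp : ¬(s.filter fun z => z < b).Nonempty := by
        rw [Finset.not_nonempty_iff_eq_empty]
        exact Finset.card_eq_zero.mp (Nat.le_zero.mp hle)
      rw [eq_min_of_filter_empty hs hb hemp]; exact hminC
    | succ k ih =>
      intro b hb hle
      by_cases hne : (s.filter fun z => z < b).Nonempty
      · obtain ⟨a, haeq⟩ : ∃ a, (s.filter fun z => z < b).max' hne = a := ⟨_, rfl⟩
        have haf : a ∈ s.filter fun z => z < b := haeq ▸ Finset.max'_mem _ hne
        rcases Finset.mem_filter.mp haf with ⟨has, hab⟩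
        have haC : a ∈ C := by
          apply ih _ has
          have hsub : (s.filter fun z => z < a) ⊆
              (s.filter fun z => z < b).erase a := by
            intro z hz
            rcases Finset.mem_filter.mp hz with ⟨hz1, hz2⟩
            exact Finset.mem_erase.mpr ⟨ne_of_lt hz2,
              Finset.mem_filter.mpr ⟨hz1, lt_trans hz2 hab⟩⟩
          have hcle := Finset.card_le_card hsub
          rw [Finset.card_erase_of_mem haf] at hcle
          omega
        have hnext : cnext s a = b := by
          have hne2 : (s.filter fun z => a < z).Nonempty :=
            ⟨b, Finset.mem_filter.mpr ⟨hb, hab⟩⟩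
          unfold cnext; rw [dif_pos hne2]
          refine le_antisymm (Finset.min'_le _ b (Finset.mem_filter.mpr ⟨hb, hab⟩)) ?_
          apply Finset.le_min'
          intro z hz
          rcases Finset.mem_filter.mp hz with ⟨hz1, hz2⟩
          by_contra hzb
          push_neg at hzb
          have hzf : z ∈ s.filter fun w => w < b := Finset.mem_filter.mpr ⟨hz1, hzb⟩
          have := Finset.le_max' (s.filter fun z => z < b) z hzf
          rw [haeq] at this
          exact absurd this (not_le_of_gt hz2)
        rw [← hnext]; exact hcl _ haC
      · rw [eq_min_of_filter_empty hs hb hne]; exact hminC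
  exact key2 _ b hb le_rfl

lemma cnext_surj {s : Finset (Fin (n + 1))} {d : Fin (n + 1)} (hd : d ∈ s) :
    ∃ c ∈ s, cnext s c = d := by
  have hsub : s.image (cnext s) ⊆ s := by
    intro z hz
    obtain ⟨a, ha, rfl⟩ := Finset.mem_image.mp hz
    exact cnext_mem ha
  have hsup : s ⊆ s.image (cnext s) := by
    refine cnext_closure hsub ⟨cnext s d, Finset.mem_image_of_mem _ hd⟩ ?_
    intro a ha
    exact Finset.mem_image_of_mem _ (hsub ha)
  obtain ⟨c, hc, hcd⟩ := Finset.mem_image.mp (hsup hd)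
  exact ⟨c, hc, hcd⟩

/-- The `τ`-block of a colour. -/
def Bl (W : Fin (n + 1) → Finset (Fin (n + 1))) (c : Fin (n + 1)) : Finset (Fin (n + 1)) :=
  Finset.univ.filter fun d => W d = W c

/-- Cyclic shift within blocks. -/
def piW (W : Fin (n + 1) → Finset (Fin (n + 1))) (c : Fin (n + 1)) : Fin (n + 1) :=
  cnext (Bl W c) c

/-- Deflecting label of a view. -/
def muW (W : Fin (n + 1) → Finset (Fin (n + 1))) (V : Finset (Fin (n + 1))) : Fin (n + 1) :=
  if h : (V.filter fun c => ∀ d ∈ V, W d ⊆ W c).Nonempty then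
    (V.filter fun c => ∀ d ∈ V, W d ⊆ W c).min' h
  else 0

/-- The labelling. -/
def labW (W : Fin (n + 1) → Finset (Fin (n + 1))) (x : ChrVertex n) : Fin (n + 1) :=
  if x.1.2 = W x.1.1 then piW W x.1.1 else muW W x.1.2

lemma mem_Bl_self (W : Fin (n + 1) → Finset (Fin (n + 1))) (c : Fin (n + 1)) : c ∈ Bl W c :=
  Finset.mem_filter.mpr ⟨Finset.mem_univ c, rfl⟩

lemma piW_mem_Bl (W : Fin (n + 1) → Finset (Fin (n + 1))) (c : Fin (n + 1)) :
    piW W c ∈ Bl W c :=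
  cnext_mem (mem_Bl_self W c)

lemma Bl_subset (W : Fin (n + 1) → Finset (Fin (n + 1))) (memW : ∀ c, c ∈ W c)
    (c : Fin (n + 1)) : Bl W c ⊆ W c := by
  intro d hd
  have hWd : W d = W c := (Finset.mem_filter.mp hd).2
  exact hWd ▸ memW d

lemma Bl_eq (W : Fin (n + 1) → Finset (Fin (n + 1))) (memW : ∀ c, c ∈ W c)
    {A : Finset (Fin (n + 1))} {c : Fin (n + 1)} (h : W c = A) :
    Bl W c = A.filter fun d => W d = A := by
  ext d
  simp only [Bl, Finset.mem_filter, Finset.mem_univ, true_and, h]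
  constructor
  · intro hd
    exact ⟨hd ▸ memW d, hd⟩
  · exact fun hd => hd.2

lemma piW_surj (W : Fin (n + 1) → Finset (Fin (n + 1))) :
    Function.Surjective (piW W) := by
  intro d
  obtain ⟨c, hc, hcd⟩ := cnext_surj (mem_Bl_self W d)
  refine ⟨c, ?_⟩
  have hWc : W c = W d := (Finset.mem_filter.mp hc).2
  have hBl : Bl W c = Bl W d := by
    ext e; simp [Bl, hWc]
  rw [piW, hBl]
  exact hcd

lemma muW_spec (W : Fin (n + 1) → Finset (Fin (n + 1)))
    (chainW : ∀ c d, W c ⊆ W d ∨ W d ⊆ W c)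
    {V : Finset (Fin (n + 1))} (hV : V.Nonempty) :
    muW W V ∈ V ∧ ∀ d ∈ V, W d ⊆ W (muW W V) := by
  obtain ⟨c, hc, hmaxc⟩ := V.exists_max_image (fun c => (W c).card) hV
  have hcmem : c ∈ V.filter fun c => ∀ d ∈ V, W d ⊆ W c := by
    refine Finset.mem_filter.mpr ⟨hc, ?_⟩
    intro d hd
    rcases chainW d c with h | h
    · exact h
    · exact (Finset.eq_of_subset_of_card_le h (hmaxc d hd)).ge
  have hne : (V.filter fun c => ∀ d ∈ V, W d ⊆ W c).Nonempty := ⟨c, hcmem⟩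
  have : muW W V ∈ V.filter fun c => ∀ d ∈ V, W d ⊆ W c := by
    rw [muW, dif_pos hne]
    exact Finset.min'_mem _ hne
  exact ⟨(Finset.mem_filter.mp this).1, (Finset.mem_filter.mp this).2⟩

lemma muW_top (W : Fin (n + 1) → Finset (Fin (n + 1)))
    (chainW : ∀ c d, W c ⊆ W d ∨ W d ⊆ W c) (memW : ∀ c, c ∈ W c)
    {A : Finset (Fin (n + 1))} (hA : A.Nonempty) (htcl : ∀ c ∈ A, W c ⊆ A) :
    muW W A ∈ A ∧ W (muW W A) = A := by
  obtain ⟨h1, h2⟩ := muW_spec W chainW hA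
  refine ⟨h1, subset_antisymm (htcl _ h1) ?_⟩
  intro d hd
  exact h2 d hd (memW d)

/-- The key combinatorial induction: on any set `A` closed under both systems of
views, the views must agree. -/
lemma chr_main (W Vw : Fin (n + 1) → Finset (Fin (n + 1))) (L : Fin (n + 1) → Fin (n + 1))
    (memW : ∀ c, c ∈ W c) (chainW : ∀ c d, W c ⊆ W d ∨ W d ⊆ W c)
    (immW : ∀ c d, c ∈ W d → W c ⊆ W d)
    (memV : ∀ c, c ∈ Vw c) (chainV : ∀ c d, Vw c ⊆ Vw d ∨ Vw d ⊆ Vw c)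
    (immV : ∀ c d, c ∈ Vw d → Vw c ⊆ Vw d)
    (hLdef : ∀ c, L c = if Vw c = W c then piW W c else muW W (Vw c))
    (hLinj : Function.Injective L)
    (hLmem : ∀ c, L c ∈ Vw c) :
    ∀ k, ∀ A : Finset (Fin (n + 1)), A.card ≤ k →
      (∀ c ∈ A, Vw c ⊆ A) → (∀ c ∈ A, W c ⊆ A) → ∀ c ∈ A, Vw c = W c := by
  intro k
  induction k with
  | zero =>
    intro A hA _ _ c hc
    rw [Nat.le_zero, Finset.card_eq_zero] at hA
    simp [hA] at hc
  | succ k ih =>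
    intro A hAcard hscl htcl
    rcases A.eq_empty_or_nonempty with rfl | hAne
    · intro c hc; simp at hc
    set M := A.filter (fun c => Vw c = A) with hMdef
    set N := A.filter (fun c => W c = A) with hNdef
    have hMne : M.Nonempty := by
      obtain ⟨c, hc, hmaxc⟩ := A.exists_max_image (fun c => (Vw c).card) hAne
      refine ⟨c, Finset.mem_filter.mpr ⟨hc, subset_antisymm (hscl c hc) ?_⟩⟩
      intro d hd
      have hdc : Vw d ⊆ Vw c := by
        rcases chainV d c with h | h
        · exact h
        · exact (Finset.eq_of_subset_of_card_le h (hmaxc d hd)).ge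
      exact hdc (memV d)
    have hμAN : muW W A ∈ N := by
      obtain ⟨h1, h2⟩ := muW_top W chainW memW hAne htcl
      exact Finset.mem_filter.mpr ⟨h1, h2⟩
    have himA : A.image L = A := by
      apply Finset.eq_of_subset_of_card_le
      · intro d hd
        obtain ⟨c, hc, rfl⟩ := Finset.mem_image.mp hd
        exact hscl c hc (hLmem c)
      · rw [Finset.card_image_of_injective _ hLinj]
    have hBscl : ∀ c ∈ A \ M, Vw c ⊆ A \ M := by
      intro c hc e he
      have hcA : c ∈ A := (Finset.mem_sdiff.mp hc).1
      refine Finset.mem_sdiff.mpr ⟨hscl c hcA he, ?_⟩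
      intro heM
      have hVe : Vw e = A := (Finset.mem_filter.mp heM).2
      have h2 : Vw e ⊆ Vw c := immV e c he
      have h3 : A ⊆ Vw c := hVe ▸ h2
      exact (Finset.mem_sdiff.mp hc).2
        (Finset.mem_filter.mpr ⟨hcA, subset_antisymm (hscl c hcA) h3⟩)
    have himB : (A \ M).image L = A \ M := by
      apply Finset.eq_of_subset_of_card_le
      · intro d hd
        obtain ⟨c, hc, rfl⟩ := Finset.mem_image.mp hd
        exact hBscl c hc (hLmem c)
      · rw [Finset.card_image_of_injective _ hLinj]
    have hLM : ∀ c ∈ M, L c ∈ M := by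
      intro c hcM
      have hcA : c ∈ A := (Finset.mem_filter.mp hcM).1
      have hLcA : L c ∈ A := himA ▸ Finset.mem_image_of_mem L hcA
      by_contra hnot
      have h1 : L c ∈ A \ M := Finset.mem_sdiff.mpr ⟨hLcA, hnot⟩
      rw [← himB] at h1
      obtain ⟨c', hc', hce⟩ := Finset.mem_image.mp h1
      have : c' = c := hLinj hce
      rw [this] at hc'
      exact (Finset.mem_sdiff.mp hc').2 hcM
    have hMN : M ⊆ N := by
      intro m hm
      have hmA : m ∈ A := (Finset.mem_filter.mp hm).1
      have hmim : m ∈ A.image L := himA.symm ▸ hmA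
      obtain ⟨c, hcA, hcm⟩ := Finset.mem_image.mp hmim
      have hcM : c ∈ M := by
        by_contra h
        have h1 : c ∈ A \ M := Finset.mem_sdiff.mpr ⟨hcA, h⟩
        have h2 : L c ∈ A \ M := himB ▸ Finset.mem_image_of_mem L h1
        rw [hcm] at h2
        exact (Finset.mem_sdiff.mp h2).2 hm
      rw [← hcm]
      have hVc : Vw c = A := (Finset.mem_filter.mp hcM).2
      by_cases hWc : Vw c = W c
      · have hWcA : W c = A := hWc.symm.trans hVc
        have hLc : L c = piW W c := by rw [hLdef, if_pos hWc]
        rw [hLc]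
        have := piW_mem_Bl W c
        rwa [Bl_eq W memW hWcA] at this
      · have hLc : L c = muW W (Vw c) := by rw [hLdef, if_neg hWc]
        rw [hLc, hVc]
        exact hμAN
    have hMeqN : M = N := by
      refine subset_antisymm hMN (cnext_closure hMN hMne ?_)
      intro a haM
      have haN : a ∈ N := hMN haM
      have hWa : W a = A := (Finset.mem_filter.mp haN).2
      have hVa : Vw a = A := (Finset.mem_filter.mp haM).2
      have hLa : L a = piW W a := by rw [hLdef, if_pos (hVa.trans hWa.symm)]
      have hBlN : Bl W a = N := by rw [Bl_eq W memW hWa]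
      have : cnext N a = L a := by rw [hLa, piW, hBlN]
      rw [this]
      exact hLM a haM
    intro c hcA
    by_cases hcM : c ∈ M
    · have h1 : Vw c = A := (Finset.mem_filter.mp hcM).2
      have hcN : c ∈ N := by rw [← hMeqN]; exact hcM
      have h2 : W c = A := (Finset.mem_filter.mp hcN).2
      rw [h1, h2]
    · have hcB : c ∈ A \ M := Finset.mem_sdiff.mpr ⟨hcA, hcM⟩
      refine ih (A \ M) ?_ hBscl ?_ c hcB
      · obtain ⟨m, hm⟩ := hMne
        have hss : A \ M ⊂ A := by
          refine ⟨Finset.sdiff_subset, fun hall => ?_⟩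
          have := hall ((Finset.mem_filter.mp hm).1)
          exact (Finset.mem_sdiff.mp this).2 hm
        have := Finset.card_lt_card hss
        omega
      · intro c' hc' d hd
        have hc'A : c' ∈ A := (Finset.mem_sdiff.mp hc').1
        refine Finset.mem_sdiff.mpr ⟨htcl c' hc'A hd, ?_⟩
        intro hdM
        have hdN : d ∈ N := by rw [← hMeqN]; exact hdM
        have hWd : W d = A := (Finset.mem_filter.mp hdN).2
        have h2 : W d ⊆ W c' := immW d c' hd
        have h3 : A ⊆ W c' := hWd ▸ h2
        have hc'N : c' ∈ N := Finset.mem_filter.mpr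
          ⟨hc'A, subset_antisymm (htcl c' hc'A) h3⟩
        have hc'M : c' ∈ M := by rw [hMeqN]; exact hc'N
        exact (Finset.mem_sdiff.mp hc').2 hc'M

end Aux

/-- Existence of a Sperner `τ`-panlabelling of the standard chromatic
subdivision: a Sperner labelling whose unique panchromatic simplex is `τ`. -/
theorem exists_sperner_panlabelling {n : ℕ} (τ : Finset (ChrVertex n))
    (hτ : IsChrSimplex τ) (hmax : τ.card = n + 1) :
    ∃ lab : ChrVertex n → Fin (n + 1),
      (∀ x : ChrVertex n, lab x ∈ x.1.2) ∧
      ∀ σ : Finset (ChrVertex n), IsChrSimplex σ →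
        (σ.image lab = Finset.univ ↔ σ = τ) := by
  classical
  -- the colour map on τ is bijective; extract the view function W
  have hcardim : (τ.image fun x : ChrVertex n => x.1.1).card = τ.card :=
    Finset.card_image_of_injOn fun x hx y hy h => hτ.1 x hx y hy h
  have himgτ : (τ.image fun x : ChrVertex n => x.1.1) = Finset.univ := by
    apply Finset.eq_univ_of_card
    rw [hcardim, hmax]
    simp
  have hWex : ∀ c : Fin (n + 1), ∃ x : ChrVertex n, x ∈ τ ∧ x.1.1 = c := by
    intro c
    have : c ∈ τ.image fun x : ChrVertex n => x.1.1 := by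
      rw [himgτ]; exact Finset.mem_univ c
    obtain ⟨x, hx, hxc⟩ := Finset.mem_image.mp this
    exact ⟨x, hx, hxc⟩
  choose v hv hvc using hWex
  set W : Fin (n + 1) → Finset (Fin (n + 1)) := fun c => (v c).1.2 with hWdef
  have memW : ∀ c, c ∈ W c := by
    intro c; have h := (v c).2; rw [hvc c] at h; exact h
  have chainW : ∀ c d, W c ⊆ W d ∨ W d ⊆ W c :=
    fun c d => hτ.2.1 (v c) (hv c) (v d) (hv d)
  have immW : ∀ c d, c ∈ W d → W c ⊆ W d := by
    intro c d h
    exact hτ.2.2 (v c) (hv c) (v d) (hv d) (by rw [hvc]; exact h)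
  have memτ_iff : ∀ x : ChrVertex n, x ∈ τ ↔ x.1.2 = W x.1.1 := by
    intro x
    constructor
    · intro hx
      have hxv : x = v x.1.1 := hτ.1 x hx (v x.1.1) (hv _) (hvc _).symm
      rw [hWdef]
      exact congrArg (fun y : ChrVertex n => y.1.2) hxv
    · intro hxv
      have h1 : x.1 = (v x.1.1).1 := Prod.ext (hvc _).symm hxv
      have : x = v x.1.1 := Subtype.ext h1
      rw [this]; exact hv _
  -- the labelling
  refine ⟨labW W, ?_, ?_⟩
  · -- Sperner condition
    intro x
    rw [labW]
    split_ifs with h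
    · rw [h]
      exact Bl_subset W memW x.1.1 (piW_mem_Bl W x.1.1)
    · exact (muW_spec W chainW ⟨x.1.1, x.2⟩).1
  intro σ hσ
  constructor
  · -- panchromatic ⇒ σ = τ
    intro hpan
    have hcard1 : n + 1 ≤ σ.card := by
      have h := Finset.card_image_le (s := σ) (f := labW W)
      rw [hpan] at h
      simpa using h
    have hcardimσ : (σ.image fun x : ChrVertex n => x.1.1).card = σ.card :=
      Finset.card_image_of_injOn fun x hx y hy h => hσ.1 x hx y hy h
    have hcard2 : σ.card ≤ n + 1 := by
      rw [← hcardimσ]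
      simpa using Finset.card_le_univ (σ.image fun x : ChrVertex n => x.1.1)
    have hcardσ : σ.card = n + 1 := le_antisymm hcard2 hcard1
    have himgσ : (σ.image fun x : ChrVertex n => x.1.1) = Finset.univ := by
      apply Finset.eq_univ_of_card
      rw [hcardimσ, hcardσ]
      simp
    have huex : ∀ c : Fin (n + 1), ∃ x : ChrVertex n, x ∈ σ ∧ x.1.1 = c := by
      intro c
      have : c ∈ σ.image fun x : ChrVertex n => x.1.1 := by
        rw [himgσ]; exact Finset.mem_univ c
      obtain ⟨x, hx, hxc⟩ := Finset.mem_image.mp this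
      exact ⟨x, hx, hxc⟩
    choose u hu huc using huex
    set Vw : Fin (n + 1) → Finset (Fin (n + 1)) := fun c => (u c).1.2 with hVwdef
    have memV : ∀ c, c ∈ Vw c := by
      intro c; have h := (u c).2; rw [huc c] at h; exact h
    have chainV : ∀ c d, Vw c ⊆ Vw d ∨ Vw d ⊆ Vw c :=
      fun c d => hσ.2.1 (u c) (hu c) (u d) (hu d)
    have immV : ∀ c d, c ∈ Vw d → Vw c ⊆ Vw d := by
      intro c d h
      exact hσ.2.2 (u c) (hu c) (u d) (hu d) (by rw [huc]; exact h)
    set L : Fin (n + 1) → Fin (n + 1) := fun c => labW W (u c) with hLdef'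
    have hLdef : ∀ c, L c = if Vw c = W c then piW W c else muW W (Vw c) := by
      intro c
      rw [hLdef']
      simp only [labW, huc, hVwdef]
    have hLsurj : Function.Surjective L := by
      intro d
      have : d ∈ σ.image (labW W) := by rw [hpan]; exact Finset.mem_univ d
      obtain ⟨x, hx, hxd⟩ := Finset.mem_image.mp this
      refine ⟨x.1.1, ?_⟩
      have hxu : x = u x.1.1 := hσ.1 x hx (u x.1.1) (hu _) (huc _).symm
      show labW W (u x.1.1) = d
      rw [← hxu, hxd]
    have hLinj : Function.Injective L := Finite.injective_iff_surjective.mpr hLsurj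
    have hLmem : ∀ c, L c ∈ Vw c := by
      intro c
      rw [hLdef']
      show labW W (u c) ∈ (u c).1.2
      rw [labW]
      split_ifs with h
      · rw [h]
        exact Bl_subset W memW (u c).1.1 (piW_mem_Bl W (u c).1.1)
      · exact (muW_spec W chainW ⟨(u c).1.1, (u c).2⟩).1
    have hVW : ∀ c, Vw c = W c := by
      intro c
      refine chr_main W Vw L memW chainW immW memV chainV immV hLdef hLinj hLmem
        (n + 1) Finset.univ (by simp) (fun c _ => Finset.subset_univ _)
        (fun c _ => Finset.subset_univ _) c (Finset.mem_univ c)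
    have hsub : σ ⊆ τ := by
      intro x hx
      have hxu : x = u x.1.1 := hσ.1 x hx (u x.1.1) (hu _) (huc _).symm
      rw [memτ_iff]
      have h1 : x.1.2 = Vw x.1.1 := congrArg (fun y : ChrVertex n => y.1.2) hxu
      rw [h1, hVW]
    exact Finset.eq_of_subset_of_card_le hsub (by rw [hmax, hcardσ])
  · -- σ = τ ⇒ panchromatic
    rintro rfl
    apply Finset.eq_univ_of_forall
    intro d
    obtain ⟨c, hcd⟩ := piW_surj W d
    refine Finset.mem_image.mpr ⟨v c, hv c, ?_⟩
    have hcond : (v c).1.2 = W ((v c).1.1) := by rw [hvc]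
    rw [labW, if_pos hcond, hvc, hcd]
end
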